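/- For the pp-wave metric, at every point p ∈ ℝ⁴ the Ricci tensor satisfies Ric₁₁(p) = ∂₂∂₂H(p) + ∂₃∂₃H(p), and Ric_{ab}(p) = 0 for every pair of indices (a, b) ≠ (1, 1). -/

import Mathlib

noncomputable section

open scoped BigOperators

/-- Partial derivative of `f : ℝ⁴ → ℝ` in the `μ`-th coordinate direction. -/
def pd (μ : Fin 4) (f : (Fin 4 → ℝ) → ℝ) (p : Fin 4 → ℝ) : ℝ :=
  fderiv ℝ f p (Pi.single μ 1)

/-- The pp-wave metric `ds² = 2H du² + 2 du dv − dx² − dy²` in coordinates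
`(v,u,x,y)`. -/
def gmet (H : (Fin 4 → ℝ) → ℝ) (p : Fin 4 → ℝ) : Matrix (Fin 4) (Fin 4) ℝ :=
  Matrix.of fun μ ν =>
    if μ = 1 ∧ ν = 1 then 2 * H p
    else if (μ = 0 ∧ ν = 1) ∨ (μ = 1 ∧ ν = 0) then 1
    else if (μ = 2 ∧ ν = 2) ∨ (μ = 3 ∧ ν = 3) then (-1 : ℝ)
    else 0

/-- The pointwise inverse of the pp-wave metric. -/
def ginv (H : (Fin 4 → ℝ) → ℝ) (p : Fin 4 → ℝ) : Matrix (Fin 4) (Fin 4) ℝ :=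
  Matrix.of fun μ ν =>
    if μ = 0 ∧ ν = 0 then -2 * H p
    else if (μ = 0 ∧ ν = 1) ∨ (μ = 1 ∧ ν = 0) then 1
    else if (μ = 2 ∧ ν = 2) ∨ (μ = 3 ∧ ν = 3) then (-1 : ℝ)
    else 0

/-- Christoffel symbols `Γ^l_{μν}` of the Levi-Civita connection of the pp-wave metric. -/
def Γpp (H : (Fin 4 → ℝ) → ℝ) (l μ ν : Fin 4) (p : Fin 4 → ℝ) : ℝ :=
  (1 / 2) * ∑ σ : Fin 4, ginv H p l σ *
    (pd μ (fun q => gmet H q ν σ) p + pd ν (fun q => gmet H q μ σ) p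
      - pd σ (fun q => gmet H q μ ν) p)

/-- Riemann curvature components
`R^a_{bμν} = ∂_μ Γ^a_{bν} − ∂_ν Γ^a_{bμ} + Σ_γ (Γ^a_{γμ}Γ^γ_{bν} − Γ^a_{γν}Γ^γ_{bμ})`. -/
def Riem (H : (Fin 4 → ℝ) → ℝ) (a b μ ν : Fin 4) (p : Fin 4 → ℝ) : ℝ :=
  pd μ (Γpp H a b ν) p - pd ν (Γpp H a b μ) p
    + ∑ γ : Fin 4, (Γpp H a γ μ p * Γpp H γ b ν p - Γpp H a γ ν p * Γpp H γ b μ p)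

/-- Ricci tensor `Ric_{bν} = Σ_a R^a_{baν}`. -/
def Ricci (H : (Fin 4 → ℝ) → ℝ) (b ν : Fin 4) (p : Fin 4 → ℝ) : ℝ :=
  ∑ a : Fin 4, Riem H a b a ν p

/-- Scalar curvature `S = Σ_{β,ν} ginv^{βν} Ric_{βν}`. -/
def Scal (H : (Fin 4 → ℝ) → ℝ) (p : Fin 4 → ℝ) : ℝ :=
  ∑ b : Fin 4, ∑ ν : Fin 4, ginv H p b ν * Ricci H b ν p


section PPWaveAux

variable {H f : (Fin 4 → ℝ) → ℝ}

lemma pd_const' (μ : Fin 4) (c : ℝ) (p : Fin 4 → ℝ) : pd μ (fun _ => c) p = 0 := by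
  simp [pd]

lemma pd_comm (hf : ContDiff ℝ (⊤ : ℕ∞) f) (a b : Fin 4) (p : Fin 4 → ℝ) :
    pd a (pd b f) p = pd b (pd a f) p := by
  have hd : ContDiff ℝ (⊤ : ℕ∞) (fderiv ℝ f) := (contDiff_infty_iff_fderiv.mp hf).2
  have h1 : ∀ v w : Fin 4 → ℝ,
      fderiv ℝ (fun q => fderiv ℝ f q w) p v = fderiv ℝ (fderiv ℝ f) p v w := by
    intro v w
    rw [fderiv_clm_apply
      ((hd.differentiable (by simp : ((⊤ : ℕ∞) : WithTop ℕ∞) ≠ 0)) p)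
      (differentiableAt_const w)]
    simp
  have hsymm : IsSymmSndFDerivAt ℝ f p := by
    apply hf.contDiffAt.isSymmSndFDerivAt
    rw [minSmoothness_of_isRCLikeNormedField]
    exact (by decide : (2 : WithTop ℕ∞) ≤ ((⊤ : ℕ∞) : WithTop ℕ∞))
  show fderiv ℝ (fun q => fderiv ℝ f q (Pi.single b 1)) p (Pi.single a 1) = _
  rw [h1, hsymm.eq, ← h1]
  rfl

lemma pd_gmet (hf : Differentiable ℝ H) (μ ν σ : Fin 4) (p : Fin 4 → ℝ) :
    pd μ (fun q => gmet H q ν σ) p = if ν = 1 ∧ σ = 1 then 2 * pd μ H p else 0 := by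
  fin_cases ν <;> fin_cases σ <;>
    simp [gmet, Matrix.of_apply, pd, fderiv_const_mul (hf p)]

lemma Γ0_eq (hf : Differentiable ℝ H) (h0 : ∀ p, pd 0 H p = 0) (μ ν : Fin 4) :
    Γpp H 0 μ ν = fun p =>
      if μ = 1 then (if ν = 1 then pd 1 H p else pd ν H p)
      else if ν = 1 then pd μ H p else 0 := by
  funext p
  simp only [Γpp, Fin.sum_univ_four, pd_gmet hf, ginv, Matrix.of_apply]
  fin_cases μ <;> fin_cases ν <;> simp [h0 p]

lemma Γ1_eq (hf : Differentiable ℝ H) (h0 : ∀ p, pd 0 H p = 0) (μ ν : Fin 4) :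
    Γpp H 1 μ ν = fun _ => 0 := by
  funext p
  simp only [Γpp, Fin.sum_univ_four, pd_gmet hf, ginv, Matrix.of_apply]
  fin_cases μ <;> fin_cases ν <;> simp [h0 p]

lemma Γ2_eq (hf : Differentiable ℝ H) (μ ν : Fin 4) :
    Γpp H 2 μ ν = fun p => if μ = 1 ∧ ν = 1 then pd 2 H p else 0 := by
  funext p
  simp only [Γpp, Fin.sum_univ_four, pd_gmet hf, ginv, Matrix.of_apply]
  fin_cases μ <;> fin_cases ν <;> simp

lemma Γ3_eq (hf : Differentiable ℝ H) (μ ν : Fin 4) :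
    Γpp H 3 μ ν = fun p => if μ = 1 ∧ ν = 1 then pd 3 H p else 0 := by
  funext p
  simp only [Γpp, Fin.sum_univ_four, pd_gmet hf, ginv, Matrix.of_apply]
  fin_cases μ <;> fin_cases ν <;> simp

end PPWaveAux

/-- For the pp-wave metric the only nonzero Ricci component is
`Ric₁₁ = ∂₂∂₂H + ∂₃∂₃H`. -/
theorem pp_wave_ricci (H : (Fin 4 → ℝ) → ℝ)
    (hH : ContDiff ℝ (⊤ : ℕ∞) H) (h0 : ∀ p, pd 0 H p = 0) (p : Fin 4 → ℝ) :
    Ricci H 1 1 p = pd 2 (pd 2 H) p + pd 3 (pd 3 H) p ∧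
    ∀ a b : Fin 4, (a, b) ≠ ((1 : Fin 4), (1 : Fin 4)) → Ricci H a b p = 0 := by
  have hdiff : Differentiable ℝ H :=
    hH.differentiable (by simp : ((⊤ : ℕ∞) : WithTop ℕ∞) ≠ 0)
  have h00 : ∀ (ν : Fin 4) (q : Fin 4 → ℝ), pd 0 (pd ν H) q = 0 := by
    intro ν q
    rw [pd_comm hH 0 ν q, show pd 0 H = fun _ => (0 : ℝ) from funext h0]
    exact pd_const' _ _ _
  have hΓ0 := Γ0_eq hdiff h0
  have hΓ1 := Γ1_eq hdiff h0
  have hΓ2 := Γ2_eq (H := H) hdiff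
  have hΓ3 := Γ3_eq (H := H) hdiff
  constructor
  · simp [Ricci, Riem, Fin.sum_univ_four, hΓ0, hΓ1, hΓ2, hΓ3, h0, h00, pd_const']
  · intro a b hab
    fin_cases a <;> fin_cases b <;>
      first
      | exact absurd rfl hab
      | simp [Ricci, Riem, Fin.sum_univ_four, hΓ0, hΓ1, hΓ2, hΓ3, h0, h00, pd_const']
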